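/- For distinct indices i, j, l, m ∈ {1,…,k}, E[D^{ij}(0) · D^{lm}(−J,−1)] = 0, where D^{ij}(W) = Cⁱ(W) − Cʲ(W) is the net discrepancy of burger i over burger j and J is the first time before 0 such that X(−J,−1) contains exactly one burger. -/

import Mathlib

open MeasureTheory ProbabilityTheory Filter
open scoped ENNReal NNReal

inductive Symb (k : ℕ) where
  | burger : Fin k → Symb k
  | order  : Fin k → Symb k
  | fresh  : Symb k
deriving DecidableEq

instance {k : ℕ} : MeasurableSpace (Symb k) := ⊤

abbrev Word (k : ℕ) := List (Symb k)

def Symb.isBurger {k : ℕ} : Symb k → Bool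
  | .burger _ => true
  | _ => false

/-- One step of stack reduction: the state is (remaining orders, burger stack). -/
def pushSym {k : ℕ} : Word k × List (Fin k) → Symb k → Word k × List (Fin k)
  | (O, B), .burger i => (O, B ++ [i])
  | (O, B), .order i => if i ∈ B then (O, (B.reverse.erase i).reverse) else (O ++ [.order i], B)
  | (O, B), .fresh => if B.isEmpty then (O ++ [.fresh], B) else (O, B.dropLast)

/-- The reduced form of a word modulo the burger/order relations. -/
def reduce {k : ℕ} (w : Word k) : Word k :=
  let s := w.foldl pushSym ([], [])
  s.1 ++ s.2.map Symb.burger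

/-- The word `X(m) X(m+1) ⋯ X(n)` (unreduced). -/
def seg {k : ℕ} (ω : ℤ → Symb k) (m n : ℤ) : Word k :=
  (List.range (n + 1 - m).toNat).map fun t => ω (m + t)

/-- Net total burger count `C(W)`: burgers minus orders (incl. fresh). -/
def cnt {k : ℕ} (w : Word k) : ℤ :=
  ((w.filter (·.isBurger)).length : ℤ) - ((w.filter (fun s => !s.isBurger)).length : ℤ)

/-- Contribution of a single symbol to the discrepancy `D^{ij}`. -/
def dsym {k : ℕ} (i j : Fin k) : Symb k → ℤ
  | .burger t => if t = i then 1 else if t = j then -1 else 0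
  | .order t => if t = i then -1 else if t = j then 1 else 0
  | .fresh => 0

/-- Discrepancy `D^{ij}(W)` of a word. -/
def dcnt {k : ℕ} (i j : Fin k) (w : Word k) : ℤ := (w.map (dsym i j)).sum

/-- Number of burger symbols in a word. -/
def numBurgers {k : ℕ} (w : Word k) : ℕ := (w.filter (·.isBurger)).length

/-- The order at time `n` consumes the burger at time `m` (i.e. `φ(m) = n`). -/
def MatchedAt {k : ℕ} (ω : ℤ → Symb k) (m n : ℤ) : Prop :=
  m < n ∧ ∃ i : Fin k, ω m = .burger i ∧
    Symb.order i ∉ reduce (seg ω (m+1) (n-1)) ∧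
    Symb.fresh ∉ reduce (seg ω (m+1) (n-1)) ∧
    ((ω n = .order i ∧ Symb.burger i ∉ reduce (seg ω (m+1) (n-1))) ∨
     (ω n = .fresh ∧ ∀ j : Fin k, Symb.burger j ∉ reduce (seg ω (m+1) (n-1))))

open Classical in
/-- The resolved symbol `Y(n)`: a fresh order is replaced by a typed order for
the type of burger it consumes. -/
noncomputable def Ysym {k : ℕ} (ω : ℤ → Symb k) (n : ℤ) : Symb k :=
  match ω n with
  | .fresh =>
      if h : ∃ m, MatchedAt ω m n then
        match ω h.choose with
        | .burger i => .order i
        | _ => .fresh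
      else .fresh
  | s => s

/-- The word `Y(m) ⋯ Y(n)`. -/
noncomputable def Yseg {k : ℕ} (ω : ℤ → Symb k) (m n : ℤ) : Word k :=
  (List.range (n + 1 - m).toNat).map fun t => Ysym ω (m + t)

/-- The one-step distribution of the symbols. -/
noncomputable def symPMF (k : ℕ) (p : ℝ) : Symb k → ℝ≥0∞
  | .burger _ => 1 / (2 * (k : ℝ≥0∞))
  | .order _ => ENNReal.ofReal (1 - p) / (2 * (k : ℝ≥0∞))
  | .fresh => ENNReal.ofReal p / 2

section AuxPerm

variable {k : ℕ}

/-- Apply a permutation of burger types to a symbol. -/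
def symbMap (e : Equiv.Perm (Fin k)) : Symb k → Symb k
  | .burger t => .burger (e t)
  | .order t => .order (e t)
  | .fresh => .fresh

@[simp] lemma symbMap_symm_apply (e : Equiv.Perm (Fin k)) (s : Symb k) :
    symbMap e.symm (symbMap e s) = s := by
  cases s <;> simp [symbMap]

@[simp] lemma symbMap_apply_symm (e : Equiv.Perm (Fin k)) (s : Symb k) :
    symbMap e (symbMap e.symm s) = s := by
  cases s <;> simp [symbMap]

lemma symbMap_injective (e : Equiv.Perm (Fin k)) : Function.Injective (symbMap e) :=
  Function.LeftInverse.injective (symbMap_symm_apply e)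

@[simp] lemma isBurger_symbMap (e : Equiv.Perm (Fin k)) (s : Symb k) :
    (symbMap e s).isBurger = s.isBurger := by
  cases s <;> rfl

lemma mem_map_symbMap (e : Equiv.Perm (Fin k)) (w : Word k) (s : Symb k) :
    s ∈ w.map (symbMap e) ↔ symbMap e.symm s ∈ w := by
  constructor
  · intro h
    rcases List.mem_map.1 h with ⟨a, ha, rfl⟩
    simpa using ha
  · intro h
    have := List.mem_map_of_injective (f := symbMap e) (symbMap_injective e)
      (l := w) (a := symbMap e.symm s)
    rw [symbMap_apply_symm] at this
    exact this.2 h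

lemma map_dropLast' {α β : Type*} (f : α → β) (l : List α) :
    (l.dropLast).map f = (l.map f).dropLast := by
  induction l with
  | nil => rfl
  | cons a l ih => cases l <;> simp_all

lemma choose_congr {α : Sort*} {P Q : α → Prop} (hPQ : P = Q)
    (h1 : Exists P) (h2 : Exists Q) : h1.choose = h2.choose := by
  subst hPQ; rfl

lemma pushSym_map (e : Equiv.Perm (Fin k)) (O : Word k) (B : List (Fin k)) (s : Symb k) :
    pushSym (O.map (symbMap e), B.map e) (symbMap e s)
      = ((pushSym (O, B) s).1.map (symbMap e), (pushSym (O, B) s).2.map e) := by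
  cases s with
  | burger t => simp [pushSym, symbMap]
  | order t =>
      by_cases h : t ∈ B
      · have h' : (e t) ∈ B.map e := List.mem_map.2 ⟨t, h, rfl⟩
        simp only [pushSym, symbMap, if_pos h, if_pos h']
        rw [← List.map_reverse, ← List.map_erase e.injective, List.map_reverse]
      · have h' : (e t) ∉ B.map e := by
          intro hc
          rcases List.mem_map.1 hc with ⟨a, ha, hae⟩
          exact h (e.injective hae ▸ ha)
        simp [pushSym, symbMap, if_neg h, if_neg h']
  | fresh =>
      by_cases h : B.isEmpty
      · have h' : (B.map e).isEmpty := by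
          cases B <;> simp_all
        simp [pushSym, symbMap, h, h']
      · have h' : ¬ (B.map e).isEmpty := by
          cases B <;> simp_all
        simp only [pushSym, symbMap, if_neg h, if_neg h']
        rw [map_dropLast']

lemma foldl_pushSym_map (e : Equiv.Perm (Fin k)) (w : Word k) (O : Word k) (B : List (Fin k)) :
    (w.map (symbMap e)).foldl pushSym (O.map (symbMap e), B.map e)
      = ((w.foldl pushSym (O, B)).1.map (symbMap e), (w.foldl pushSym (O, B)).2.map e) := by
  induction w generalizing O B with
  | nil => rfl
  | cons a w ih =>
      simp only [List.map_cons, List.foldl_cons, pushSym_map]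
      rw [ih]

lemma reduce_map (e : Equiv.Perm (Fin k)) (w : Word k) :
    reduce (w.map (symbMap e)) = (reduce w).map (symbMap e) := by
  have h := foldl_pushSym_map e w ([] : Word k) ([] : List (Fin k))
  simp only [List.map_nil] at h
  simp only [reduce, h, List.map_append, List.map_map]
  rfl

lemma numBurgers_map (e : Equiv.Perm (Fin k)) (w : Word k) :
    numBurgers (w.map (symbMap e)) = numBurgers w := by
  induction w with
  | nil => rfl
  | cons a w ih =>
      simp only [numBurgers, List.map_cons, List.filter_cons] at *
      rw [isBurger_symbMap]
      cases h : a.isBurger <;> simp_all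

/-- Apply a permutation of burger types pointwise to a trajectory. -/
def Tmap (e : Equiv.Perm (Fin k)) (ω : ℤ → Symb k) : ℤ → Symb k := fun n => symbMap e (ω n)

@[simp] lemma Tmap_symm (e : Equiv.Perm (Fin k)) (ω : ℤ → Symb k) :
    Tmap e.symm (Tmap e ω) = ω := by
  funext n; simp [Tmap]

lemma seg_Tmap (e : Equiv.Perm (Fin k)) (ω : ℤ → Symb k) (a b : ℤ) :
    seg (Tmap e ω) a b = (seg ω a b).map (symbMap e) := by
  simp [seg, Tmap, List.map_map, Function.comp]

lemma matchedAt_Tmap (e : Equiv.Perm (Fin k)) (ω : ℤ → Symb k) (a b : ℤ)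
    (h : MatchedAt ω a b) : MatchedAt (Tmap e ω) a b := by
  obtain ⟨hab, i, hωa, h1, h2, h3⟩ := h
  refine ⟨hab, e i, ?_, ?_, ?_, ?_⟩
  · simp [Tmap, hωa, symbMap]
  · rw [seg_Tmap, reduce_map, mem_map_symbMap]
    simpa [symbMap] using h1
  · rw [seg_Tmap, reduce_map, mem_map_symbMap]
    simpa [symbMap] using h2
  · rcases h3 with ⟨hn, hb⟩ | ⟨hn, hb⟩
    · left
      refine ⟨by simp [Tmap, hn, symbMap], ?_⟩
      rw [seg_Tmap, reduce_map, mem_map_symbMap]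
      simpa [symbMap] using hb
    · right
      refine ⟨by simp [Tmap, hn, symbMap], fun j => ?_⟩
      rw [seg_Tmap, reduce_map, mem_map_symbMap]
      simpa [symbMap] using hb (e.symm j)

lemma matchedAt_Tmap_iff (e : Equiv.Perm (Fin k)) (ω : ℤ → Symb k) (a b : ℤ) :
    MatchedAt (Tmap e ω) a b ↔ MatchedAt ω a b := by
  refine ⟨fun h => ?_, matchedAt_Tmap e ω a b⟩
  have := matchedAt_Tmap e.symm (Tmap e ω) a b h
  rwa [Tmap_symm] at this

lemma Ysym_Tmap (e : Equiv.Perm (Fin k)) (ω : ℤ → Symb k) (n : ℤ) :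
    Ysym (Tmap e ω) n = symbMap e (Ysym ω n) := by
  have key : (fun m => MatchedAt (Tmap e ω) m n) = (fun m => MatchedAt ω m n) :=
    funext fun m => propext (matchedAt_Tmap_iff e ω m n)
  cases h : ω n with
  | burger t =>
      have h' : Tmap e ω n = .burger (e t) := by simp [Tmap, h, symbMap]
      unfold Ysym
      rw [h, h']
      rfl
  | order t =>
      have h' : Tmap e ω n = .order (e t) := by simp [Tmap, h, symbMap]
      unfold Ysym
      rw [h, h']
      rfl
  | fresh =>
      have h' : Tmap e ω n = .fresh := by simp [Tmap, h, symbMap]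
      unfold Ysym
      rw [h, h']
      by_cases hex : ∃ m, MatchedAt ω m n
      · have hexT : ∃ m, MatchedAt (Tmap e ω) m n := by
          obtain ⟨m0, hm0⟩ := hex
          exact ⟨m0, matchedAt_Tmap e ω m0 n hm0⟩
        rw [dif_pos hexT, dif_pos hex]
        have hc : hexT.choose = hex.choose := choose_congr key hexT hex
        obtain ⟨_, i0, hb, _⟩ := hex.choose_spec
        have hb' : Tmap e ω hexT.choose = .burger (e i0) := by
          simp [Tmap, hc, hb, symbMap]
        rw [hb, hb']
        rfl
      · have hexT : ¬ ∃ m, MatchedAt (Tmap e ω) m n := by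
          intro hc
          obtain ⟨m0, hm0⟩ := hc
          exact hex ⟨m0, (matchedAt_Tmap_iff e ω m0 n).1 hm0⟩
        rw [dif_neg hexT, dif_neg hex]
        rfl

lemma Yseg_Tmap (e : Equiv.Perm (Fin k)) (ω : ℤ → Symb k) (a b : ℤ) :
    Yseg (Tmap e ω) a b = (Yseg ω a b).map (symbMap e) := by
  simp [Yseg, List.map_map, Function.comp, Ysym_Tmap]

lemma symPMF_symbMap (e : Equiv.Perm (Fin k)) (p : ℝ) (s : Symb k) :
    symPMF k p (symbMap e s) = symPMF k p s := by
  cases s <;> rfl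

lemma measurable_Tmap (e : Equiv.Perm (Fin k)) :
    Measurable (Tmap (k := k) e) :=
  measurable_pi_lambda _ fun n => Measurable.comp (fun _ _ => trivial) (measurable_pi_apply n)

end AuxPerm
section Aux2

variable {k : ℕ}

def symbEncode : Symb k → (Fin k) ⊕ (Fin k) ⊕ Unit
  | .burger t => Sum.inl t
  | .order t => Sum.inr (Sum.inl t)
  | .fresh => Sum.inr (Sum.inr ())

instance : Finite (Symb k) := by
  apply Finite.of_injective (symbEncode (k := k))
  rintro ⟨⟩ ⟨⟩ h <;> simp_all [symbEncode]

lemma dsym_symbMap_swap (i j : Fin k) (hij : i ≠ j) (s : Symb k) :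
    dsym i j (symbMap (Equiv.swap i j) s) = - dsym i j s := by
  cases s with
  | burger t =>
      simp only [symbMap, dsym]
      rcases eq_or_ne t i with rfl | h1
      · simp [Equiv.swap_apply_left, hij, hij.symm]
      · rcases eq_or_ne t j with rfl | h2
        · simp [Equiv.swap_apply_right, hij, hij.symm]
        · simp [Equiv.swap_apply_of_ne_of_ne h1 h2, h1, h2]
  | order t =>
      simp only [symbMap, dsym]
      rcases eq_or_ne t i with rfl | h1
      · simp [Equiv.swap_apply_left, hij, hij.symm]
      · rcases eq_or_ne t j with rfl | h2
        · simp [Equiv.swap_apply_right, hij, hij.symm]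
        · simp [Equiv.swap_apply_of_ne_of_ne h1 h2, h1, h2]
  | fresh => simp [symbMap, dsym]

lemma dsym_symbMap_other (i j l m : Fin k) (hil : i ≠ l) (him : i ≠ m)
    (hjl : j ≠ l) (hjm : j ≠ m) (s : Symb k) :
    dsym l m (symbMap (Equiv.swap i j) s) = dsym l m s := by
  cases s with
  | burger t =>
      simp only [symbMap, dsym]
      rcases eq_or_ne t i with rfl | h1
      · simp [Equiv.swap_apply_left, hil, him, hjl, hjm]
      · rcases eq_or_ne t j with rfl | h2
        · simp [Equiv.swap_apply_right, hil, him, hjl, hjm]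
        · simp [Equiv.swap_apply_of_ne_of_ne h1 h2]
  | order t =>
      simp only [symbMap, dsym]
      rcases eq_or_ne t i with rfl | h1
      · simp [Equiv.swap_apply_left, hil, him, hjl, hjm]
      · rcases eq_or_ne t j with rfl | h2
        · simp [Equiv.swap_apply_right, hil, him, hjl, hjm]
        · simp [Equiv.swap_apply_of_ne_of_ne h1 h2]
  | fresh => rfl

lemma dcnt_map_swap (i j l m : Fin k) (hil : i ≠ l) (him : i ≠ m)
    (hjl : j ≠ l) (hjm : j ≠ m) (w : Word k) :
    dcnt l m (w.map (symbMap (Equiv.swap i j))) = dcnt l m w := by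
  simp only [dcnt, List.map_map]
  congr 1
  apply List.map_congr_left
  intro a _
  exact dsym_symbMap_other i j l m hil him hjl hjm a

end Aux2
/-- For distinct indices `i, j, l, m`, `E[D^{ij}(0) · D^{lm}(-J,-1)] = 0`. -/
theorem stmt6 (k : ℕ) (hk : 4 ≤ k) (p : ℝ) (hp0 : 0 ≤ p) (hp1 : p ≤ 1)
    (μ : Measure (ℤ → Symb k)) [IsProbabilityMeasure μ]
    (hindep : iIndepFun
      (fun n ω => ω n) μ)
    (hdist : ∀ (n : ℤ) (s : Symb k), μ {ω | ω n = s} = symPMF k p s)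
    (J : (ℤ → Symb k) → ℕ)
    (hJ : ∀ᵐ ω ∂μ, 0 < J ω ∧
      numBurgers (reduce (seg ω (-(J ω : ℤ)) (-1))) = 1 ∧
      ∀ j : ℕ, 0 < j → j < J ω → numBurgers (reduce (seg ω (-(j : ℤ)) (-1))) ≠ 1)
    (i j l m : Fin k) (hij : i ≠ j) (hlm : l ≠ m) (hil : i ≠ l) (him : i ≠ m)
    (hjl : j ≠ l) (hjm : j ≠ m) :
    ∫ ω, ((dsym i j (Ysym ω 0) * dcnt l m (Yseg ω (-(J ω : ℤ)) (-1)) : ℤ) : ℝ) ∂μ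
      = 0 := by
  classical
  have hTm : Measurable (Tmap (k := k) (Equiv.swap i j)) := measurable_Tmap _
  -- measure of a finite-dimensional "equality on a finset" event
  have hpoint : ∀ (s : Finset ℤ) (y : ℤ → Symb k),
      μ {ω | ∀ i' ∈ s, ω i' = y i'} = ∏ i' ∈ s, symPMF k p (y i') := by
    intro s y
    have h := hindep.measure_inter_preimage_eq_mul (S := s)
      (sets := fun i' => ({y i'} : Set (Symb k))) (fun i' _ => trivial)
    have hset : {ω : ℤ → Symb k | ∀ i' ∈ s, ω i' = y i'}
        = ⋂ i' ∈ s, (fun ω : ℤ → Symb k => ω i') ⁻¹' {y i'} := by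
      ext ω; simp
    rw [hset, h]
    exact Finset.prod_congr rfl fun i' _ => hdist i' (y i')
  have hone : ∀ (s : Finset ℤ) (x : ∀ _ : s, Symb k),
      μ {ω | (fun i' : s => ω i') = x} = ∏ i' ∈ s.attach, symPMF k p (x i') := by
    intro s x
    set y : ℤ → Symb k := fun i' => if h : i' ∈ s then x ⟨i', h⟩ else Symb.fresh with hy
    have hset : {ω : ℤ → Symb k | (fun i' : s => ω i') = x}
        = {ω | ∀ i' ∈ s, ω i' = y i'} := by
      ext ω
      simp only [Set.mem_setOf_eq, funext_iff]
      constructor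
      · intro h i' hi'
        rw [hy]
        simp only [dif_pos hi']
        exact h ⟨i', hi'⟩
      · intro h i'
        have := h i' i'.2
        rw [hy] at this
        simpa [i'.2] using this
    rw [hset, hpoint s y, ← Finset.prod_attach]
    refine Finset.prod_congr rfl fun i' _ => ?_
    rw [hy]
    simp [i'.2]
  have hmeas1 : ∀ (s : Finset ℤ) (x : ∀ _ : s, Symb k),
      MeasurableSet {ω : ℤ → Symb k | (fun i' : s => ω i') = x} := by
    intro s x
    have hs : {ω : ℤ → Symb k | (fun i' : s => ω i') = x}
        = ⋂ i' : s, (fun ω : ℤ → Symb k => ω i') ⁻¹' {x i'} := by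
      ext ω; simp [funext_iff]
    rw [hs]
    exact MeasurableSet.iInter fun i' => measurable_pi_apply (i' : ℤ) trivial
  have hcyl : ∀ (s : Finset ℤ) (S : Set (∀ _ : s, Symb k)),
      μ (cylinder s S) = ∑ x ∈ S.toFinite.toFinset, ∏ i' ∈ s.attach, symPMF k p (x i') := by
    intro s S
    have hdecomp : cylinder s S
        = ⋃ x ∈ S.toFinite.toFinset, {ω : ℤ → Symb k | (fun i' : s => ω i') = x} := by
      ext ω
      simp only [mem_cylinder, Set.mem_iUnion, Set.Finite.mem_toFinset, Set.mem_setOf_eq]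
      constructor
      · intro h
        exact ⟨s.restrict ω, h, rfl⟩
      · rintro ⟨x, hx, hxe⟩
        have hxe' : s.restrict ω = x := hxe
        exact hxe'.symm ▸ hx
    have hd : Set.PairwiseDisjoint (↑S.toFinite.toFinset)
        (fun x => {ω : ℤ → Symb k | (fun i' : s => ω i') = x}) := by
      intro x _ y _ hxy
      refine Set.disjoint_left.2 fun ω h1 h2 => hxy ?_
      rw [Set.mem_setOf_eq] at h1 h2
      rw [← h1, h2]
    rw [hdecomp, measure_biUnion_finset hd fun x _ => hmeas1 s x]
    exact Finset.sum_congr rfl fun x _ => hone s x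
  have hμT : μ.map (Tmap (Equiv.swap i j)) = μ := by
    haveI hPM : IsProbabilityMeasure (μ.map (Tmap (k := k) (Equiv.swap i j))) :=
      Measure.isProbabilityMeasure_map hTm.aemeasurable
    refine ext_of_generate_finite (measurableCylinders (fun _ : ℤ => Symb k))
      generateFrom_measurableCylinders.symm isPiSystem_measurableCylinders
      (fun t ht => ?_) (by simp)
    obtain ⟨s, S, hS, rfl⟩ := (mem_measurableCylinders t).1 ht
    rw [Measure.map_apply hTm hS.cylinder]
    have hpre : Tmap (Equiv.swap i j) ⁻¹' cylinder s S
        = cylinder s ((fun (x : ∀ _ : s, Symb k) (i' : s) => symbMap (Equiv.swap i j) (x i')) ⁻¹' S) := rfl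
    rw [hpre, hcyl, hcyl]
    refine Finset.sum_nbij' (fun x => fun i' : s => symbMap (Equiv.swap i j) (x i'))
      (fun x => fun i' : s => symbMap (Equiv.swap i j).symm (x i')) ?_ ?_ ?_ ?_ ?_
    · intro x hx
      simp only [Set.Finite.mem_toFinset, Set.mem_preimage] at hx ⊢
      exact hx
    · intro x hx
      simp only [Set.Finite.mem_toFinset, Set.mem_preimage] at hx ⊢
      have hrw : (fun i' : s => symbMap (Equiv.swap i j)
          (symbMap (Equiv.swap i j).symm (x i'))) = x :=
        funext fun i' => symbMap_apply_symm _ _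
      rw [hrw]
      exact hx
    · intro x _
      funext i'
      exact symbMap_symm_apply _ _
    · intro x _
      funext i'
      exact symbMap_apply_symm _ _
    · intro x _
      exact Finset.prod_congr rfl fun i' _ => (symPMF_symbMap _ p _).symm
  have hJT : ∀ᵐ ω ∂μ, J (Tmap (Equiv.swap i j) ω) = J ω := by
    have hJ2 : ∀ᵐ ω ∂μ, 0 < J (Tmap (Equiv.swap i j) ω) ∧
        numBurgers (reduce (seg (Tmap (Equiv.swap i j) ω)
          (-(J (Tmap (Equiv.swap i j) ω) : ℤ)) (-1))) = 1 ∧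
        ∀ j' : ℕ, 0 < j' → j' < J (Tmap (Equiv.swap i j) ω) →
          numBurgers (reduce (seg (Tmap (Equiv.swap i j) ω) (-(j' : ℤ)) (-1))) ≠ 1 :=
      ae_of_ae_map hTm.aemeasurable (by rw [hμT]; exact hJ)
    filter_upwards [hJ, hJ2] with ω h1 h2
    obtain ⟨h1p, h1e, h1m⟩ := h1
    obtain ⟨h2p, h2e, h2m⟩ := h2
    have hinv : ∀ a b : ℤ, numBurgers (reduce (seg (Tmap (Equiv.swap i j) ω) a b))
        = numBurgers (reduce (seg ω a b)) := fun a b => by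
      rw [seg_Tmap, reduce_map, numBurgers_map]
    rw [hinv] at h2e
    simp only [hinv] at h2m
    rcases lt_trichotomy (J (Tmap (Equiv.swap i j) ω)) (J ω) with h | h | h
    · exact absurd h2e (h1m _ h2p h)
    · exact h
    · exact absurd h1e (h2m _ h1p h)
  set F : (ℤ → Symb k) → ℝ :=
    fun ω => ((dsym i j (Ysym ω 0) * dcnt l m (Yseg ω (-(J ω : ℤ)) (-1)) : ℤ) : ℝ) with hF
  have hae : (fun ω => F (Tmap (Equiv.swap i j) ω)) =ᵐ[μ] fun ω => - F ω := by
    filter_upwards [hJT] with ω hJω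
    rw [hF]
    simp only
    rw [hJω, Ysym_Tmap, Yseg_Tmap, dsym_symbMap_swap i j hij,
      dcnt_map_swap i j l m hil him hjl hjm]
    push_cast
    ring
  show ∫ ω, F ω ∂μ = 0
  by_cases hmeas : AEStronglyMeasurable F μ
  · have h1 : ∫ ω, F ω ∂μ = ∫ ω, F (Tmap (Equiv.swap i j) ω) ∂μ := by
      conv_lhs => rw [← hμT]
      exact integral_map hTm.aemeasurable (by rwa [hμT])
    have h2 : ∫ ω, F (Tmap (Equiv.swap i j) ω) ∂μ = - ∫ ω, F ω ∂μ := by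
      rw [integral_congr_ae hae, integral_neg]
    linarith
  · exact integral_undef fun hInt => hmeas hInt.aestronglyMeasurable
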